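/- Let p be an odd prime and v ∈ ℤ/p a non-square. The number of pairs (a,b) ∈ (ℤ/p)² satisfying a² - v·b² = 1 is exactly p + 1. -/

import Mathlib

open Finset

private lemma sum_chi_sq_sub_one (p : ℕ) [Fact p.Prime] (hp : Odd p) :
    ∑ a : ZMod p, quadraticChar (ZMod p) (a ^ 2 - 1) = -1 := by
  have hchar : ringChar (ZMod p) ≠ 2 := by
    rw [ZMod.ringChar_zmod_n]
    rintro rfl
    exact (Nat.not_odd_iff_even.mpr even_two) hp
  have h2 : (2 : ZMod p) ≠ 0 := Ring.two_ne_zero hchar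
  set χ := quadraticChar (ZMod p) with hχ
  -- reindex a ↦ x + 1
  have h1 : ∑ a : ZMod p, χ (a ^ 2 - 1) = ∑ x : ZMod p, χ x * χ (x + 2) := by
    refine (Fintype.sum_equiv (Equiv.addRight (1 : ZMod p))
      (fun x => χ x * χ (x + 2)) (fun a => χ (a ^ 2 - 1)) fun x => ?_).symm
    simp only [Equiv.coe_addRight]
    have hx : (x + 1) ^ 2 - 1 = x * (x + 2) := by ring
    rw [hx, map_mul]
  rw [h1]
  have h0 : χ 0 * χ (0 + 2) = 0 := by
    rw [MulChar.map_zero, zero_mul]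
  rw [← Finset.sum_erase_add _ _ (Finset.mem_univ (0 : ZMod p)), h0, add_zero]
  -- for x ≠ 0, χ x * χ (x + 2) = χ (1 + 2 * x⁻¹)
  have h3 : ∀ x ∈ (Finset.univ : Finset (ZMod p)).erase 0,
      χ x * χ (x + 2) = χ (1 + 2 * x⁻¹) := by
    intro x hx
    have hx0 : x ≠ 0 := Finset.ne_of_mem_erase hx
    have hxx : x + 2 = x * (1 + 2 * x⁻¹) := by
      field_simp
    rw [hxx, map_mul, ← mul_assoc, ← pow_two, quadraticChar_sq_one hx0, one_mul]
  rw [Finset.sum_congr rfl h3]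
  -- bijection x ↦ 1 + 2 x⁻¹ from univ \ {0} to univ \ {1}
  have h4 : ∑ x ∈ (Finset.univ : Finset (ZMod p)).erase 0, χ (1 + 2 * x⁻¹)
      = ∑ y ∈ (Finset.univ : Finset (ZMod p)).erase 1, χ y := by
    refine Finset.sum_nbij' (fun x => 1 + 2 * x⁻¹) (fun y => 2 * (y - 1)⁻¹) ?_ ?_ ?_ ?_ ?_
    · intro x hx
      have hx0 : x ≠ 0 := Finset.ne_of_mem_erase hx
      refine Finset.mem_erase.mpr ⟨?_, Finset.mem_univ _⟩
      intro h
      have : (2 : ZMod p) * x⁻¹ = 0 := by linear_combination h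
      rcases mul_eq_zero.mp this with h' | h'
      · exact h2 h'
      · exact hx0 (inv_eq_zero.mp h')
    · intro y hy
      have hy1 : y ≠ 1 := Finset.ne_of_mem_erase hy
      refine Finset.mem_erase.mpr ⟨?_, Finset.mem_univ _⟩
      have : y - 1 ≠ 0 := sub_ne_zero.mpr hy1
      exact mul_ne_zero h2 (inv_ne_zero this)
    · intro x hx
      have hx0 : x ≠ 0 := Finset.ne_of_mem_erase hx
      field_simp
      rw [add_sub_cancel_left]; exact div_self h2
    · intro y hy
      have hy1 : (y : ZMod p) - 1 ≠ 0 := sub_ne_zero.mpr (Finset.ne_of_mem_erase hy)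
      field_simp
      ring
    · intro x hx; rfl
  rw [h4, Finset.sum_erase_eq_sub (Finset.mem_univ (1 : ZMod p))]
  rw [quadraticChar_sum_zero hchar, map_one, zero_sub]

theorem card_solutions (p : ℕ) [Fact p.Prime] (hp : Odd p)
    (v : ZMod p) (hv : ¬ IsSquare v) :
    Nat.card {x : ZMod p × ZMod p // x.1 ^ 2 - v * x.2 ^ 2 = 1} = p + 1 := by
  have hchar : ringChar (ZMod p) ≠ 2 := by
    rw [ZMod.ringChar_zmod_n]
    rintro rfl
    exact (Nat.not_odd_iff_even.mpr even_two) hp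
  have hv0 : v ≠ 0 := by rintro rfl; exact hv ⟨0, (mul_zero 0).symm⟩
  set χ := quadraticChar (ZMod p) with hχ
  have hχv : χ v = -1 := quadraticChar_neg_one_iff_not_isSquare.mpr hv
  have hχvinv : χ v⁻¹ = -1 := by
    have : χ v * χ v⁻¹ = 1 := by
      rw [← map_mul, mul_inv_cancel₀ hv0, map_one]
    rw [hχv] at this; linarith
  -- rewrite the condition fiberwise
  classical
  have key : Nat.card {x : ZMod p × ZMod p // x.1 ^ 2 - v * x.2 ^ 2 = 1}
      = ∑ a : ZMod p, Fintype.card {b : ZMod p // b ^ 2 = (a ^ 2 - 1) * v⁻¹} := by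
    rw [Nat.card_eq_fintype_card]
    rw [Fintype.card_congr (Equiv.subtypeProdEquivSigmaSubtype
      (fun a b : ZMod p => a ^ 2 - v * b ^ 2 = 1))]
    rw [Fintype.card_sigma]
    refine Finset.sum_congr rfl fun a _ => ?_
    refine Fintype.card_congr (Equiv.subtypeEquivRight fun b => ?_)
    constructor
    · intro h
      field_simp
      linear_combination -h
    · intro h
      field_simp at h
      linear_combination -h
  -- pass to integers
  have hcard : ∀ c : ZMod p,
      (Fintype.card {b : ZMod p // b ^ 2 = c} : ℤ) = χ c + 1 := by
    intro c
    have := quadraticChar_card_sqrts hchar c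
    rwa [Set.toFinset_card] at this
  have hZ : (Nat.card {x : ZMod p × ZMod p // x.1 ^ 2 - v * x.2 ^ 2 = 1} : ℤ) = p + 1 := by
    rw [key]
    push_cast
    rw [Finset.sum_congr rfl (fun a _ => hcard ((a ^ 2 - 1) * v⁻¹))]
    rw [Finset.sum_add_distrib]
    have : ∑ a : ZMod p, χ ((a ^ 2 - 1) * v⁻¹) = 1 := by
      have : ∀ a : ZMod p, χ ((a ^ 2 - 1) * v⁻¹) = -χ (a ^ 2 - 1) := by
        intro a; rw [map_mul, hχvinv]; ring
      rw [Finset.sum_congr rfl (fun a _ => this a), Finset.sum_neg_distrib,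
        sum_chi_sq_sub_one p hp]
      ring
    rw [this, Finset.sum_const, Finset.card_univ, ZMod.card]
    push_cast; ring
  exact_mod_cast hZ
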